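/- Let c_1,…,c_n be linearly independent vectors in ℝ^m. For S ⊆ {1,…,n}, let proj_S denote the orthogonal projection onto span{c_i : i ∈ S}, and define F(S) = ∑_{j=1}^n ‖c_j − proj_S(c_j)‖². Then for every S ⊆ {1,…,n} and every i ∉ S, min_{‖x‖=1} ‖∑_{j=1}^n x_j c_j‖² ≤ F(S) − F(S ∪ {i}) ≤ max_{‖x‖=1} ‖∑_{j=1}^n x_j c_j‖², where the min and max are over unit vectors x ∈ ℝ^n. -/

import Mathlib

open scoped RealInnerProductSpace

lemma proj_sup_singleton {E : Type*} [NormedAddCommGroup E] [InnerProductSpace ℝ E]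
    (T : Submodule ℝ E) [Submodule.HasOrthogonalProjection T] (u : E) (hu : u ∈ Tᗮ) (hu1 : ‖u‖ = 1)
    (U : Submodule ℝ E) [Submodule.HasOrthogonalProjection U] (hU : U = (ℝ ∙ u) ⊔ T) (x : E) :
    (Submodule.orthogonalProjectionOnto U x : E) = (Submodule.orthogonalProjectionOnto T x : E) + ⟪x, u⟫ • u := by
  have huu : ⟪u, u⟫ = 1 := by
    rw [real_inner_self_eq_norm_sq, hu1]; norm_num
  apply Submodule.eq_starProjection_of_mem_of_inner_eq_zero
  · rw [hU]
    exact Submodule.add_mem _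
      (Submodule.mem_sup_right (Submodule.orthogonalProjectionOnto T x).2)
      (Submodule.mem_sup_left (Submodule.smul_mem _ _ (Submodule.mem_span_singleton_self u)))
  · intro w hw
    rw [hU] at hw
    obtain ⟨a, ha, t, ht, rfl⟩ := Submodule.mem_sup.mp hw
    obtain ⟨r, rfl⟩ := Submodule.mem_span_singleton.mp ha
    have h1 : ⟪x - Submodule.orthogonalProjectionOnto T x, t⟫ = 0 :=
      Submodule.starProjection_inner_eq_zero x t ht
    have h2 : ⟪t, u⟫ = 0 := hu t ht
    have h3 : ⟪(Submodule.orthogonalProjectionOnto T x : E), u⟫ = 0 := hu _ (Submodule.orthogonalProjectionOnto T x).2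
    have h4 : ⟪u, t⟫ = 0 := by rwa [real_inner_comm]
    rw [inner_sub_left] at h1 ⊢
    simp only [inner_add_left, inner_add_right, real_inner_smul_left, real_inner_smul_right,
      huu, h2, h3, h4]
    linarith

theorem stmt_10 {m n : ℕ} (c : Fin n → EuclideanSpace ℝ (Fin m))
    (hli : LinearIndependent ℝ c)
    (F : Finset (Fin n) → ℝ)
    (hF : ∀ S : Finset (Fin n), F S = ∑ j : Fin n,
      ‖c j - (Submodule.orthogonalProjectionOnto (Submodule.span ℝ (c '' ↑S)) (c j) : EuclideanSpace ℝ (Fin m))‖ ^ 2)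
    (S : Finset (Fin n)) (i : Fin n) (hi : i ∉ S) :
    sInf {y : ℝ | ∃ x : EuclideanSpace ℝ (Fin n), ‖x‖ = 1 ∧ y = ‖∑ j : Fin n, x j • c j‖ ^ 2}
        ≤ F S - F (insert i S) ∧
    F S - F (insert i S)
        ≤ sSup {y : ℝ | ∃ x : EuclideanSpace ℝ (Fin n), ‖x‖ = 1 ∧ y = ‖∑ j : Fin n, x j • c j‖ ^ 2} := by
  classical
  set Y := {y : ℝ | ∃ x : EuclideanSpace ℝ (Fin n), ‖x‖ = 1 ∧ y = ‖∑ j : Fin n, x j • c j‖ ^ 2}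
    with hYdef
  set T : Submodule ℝ (EuclideanSpace ℝ (Fin m)) := Submodule.span ℝ (c '' ↑S) with hTdef
  have hciT : c i ∉ T := hli.notMem_span_image (by simpa using hi)
  set p : EuclideanSpace ℝ (Fin m) :=
    (Submodule.orthogonalProjectionOnto T (c i) : EuclideanSpace ℝ (Fin m)) with hpdef
  have hw0 : c i - p ≠ 0 := by
    intro h
    rw [sub_eq_zero] at h
    exact hciT (h ▸ (Submodule.orthogonalProjectionOnto T (c i)).2)
  set w : EuclideanSpace ℝ (Fin m) := c i - p with hwdef
  have hnw : ‖w‖ ≠ 0 := norm_ne_zero_iff.mpr hw0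
  have hwT : w ∈ Tᗮ := Submodule.sub_starProjection_mem_orthogonal (c i)
  set u : EuclideanSpace ℝ (Fin m) := ‖w‖⁻¹ • w with hudef
  have hnu : ‖u‖ = 1 := by
    rw [hudef, norm_smul, norm_inv, norm_norm]
    field_simp
  have huT : u ∈ Tᗮ := Submodule.smul_mem _ _ hwT
  have hUeq : Submodule.span ℝ (c '' ↑(insert i S)) = (ℝ ∙ u) ⊔ T := by
    rw [Finset.coe_insert, Set.image_insert_eq, Submodule.span_insert]
    show (Submodule.span ℝ {c i}) ⊔ T = (ℝ ∙ u) ⊔ T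
    apply le_antisymm
    · apply sup_le _ le_sup_right
      rw [Submodule.span_singleton_le_iff_mem]
      have hci : c i = ‖w‖ • u + p := by
        rw [hudef, smul_smul, mul_inv_cancel₀ hnw, one_smul, hwdef, sub_add_cancel]
      rw [hci]
      exact Submodule.add_mem _
        (Submodule.mem_sup_left (Submodule.smul_mem _ _ (Submodule.mem_span_singleton_self u)))
        (Submodule.mem_sup_right (Submodule.orthogonalProjectionOnto T (c i)).2)
    · apply sup_le _ le_sup_right
      rw [Submodule.span_singleton_le_iff_mem, hudef]
      apply Submodule.smul_mem
      rw [hwdef]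
      exact Submodule.sub_mem _
        (Submodule.mem_sup_left (Submodule.mem_span_singleton_self _))
        (Submodule.mem_sup_right (Submodule.orthogonalProjectionOnto T (c i)).2)
  have hproj := proj_sup_singleton T u huT hnu _ hUeq
  -- per-term identity
  have hterm : ∀ j : Fin n,
      ‖c j - (Submodule.orthogonalProjectionOnto (Submodule.span ℝ (c '' ↑(insert i S))) (c j) :
        EuclideanSpace ℝ (Fin m))‖ ^ 2
      = ‖c j - (Submodule.orthogonalProjectionOnto T (c j) : EuclideanSpace ℝ (Fin m))‖ ^ 2 - ⟪c j, u⟫ ^ 2 := by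
    intro j
    rw [hproj]
    have heq : c j - ((Submodule.orthogonalProjectionOnto T (c j) : EuclideanSpace ℝ (Fin m)) + ⟪c j, u⟫ • u)
        = (c j - (Submodule.orthogonalProjectionOnto T (c j) : EuclideanSpace ℝ (Fin m))) - ⟪c j, u⟫ • u := by
      abel
    rw [heq, norm_sub_sq_real]
    have h3 : ⟪(Submodule.orthogonalProjectionOnto T (c j) : EuclideanSpace ℝ (Fin m)), u⟫ = 0 :=
      huT _ (Submodule.orthogonalProjectionOnto T (c j)).2
    have h1 : ⟪c j - (Submodule.orthogonalProjectionOnto T (c j) : EuclideanSpace ℝ (Fin m)), ⟪c j, u⟫ • u⟫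
        = ⟪c j, u⟫ ^ 2 := by
      rw [real_inner_smul_right, inner_sub_left, h3]
      ring
    have h2 : ‖(⟪c j, u⟫ : ℝ) • u‖ ^ 2 = ⟪c j, u⟫ ^ 2 := by
      rw [norm_smul, hnu, mul_one, Real.norm_eq_abs, sq_abs]
    rw [h1, h2]
    ring
  have hdiff : F S - F (insert i S) = ∑ j : Fin n, ⟪c j, u⟫ ^ 2 := by
    rw [hF, hF, ← Finset.sum_sub_distrib]
    apply Finset.sum_congr rfl
    intro j _
    rw [hterm j]
    ring
  set D : ℝ := ∑ j : Fin n, ⟪c j, u⟫ ^ 2 with hDdef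
  have hD0 : 0 ≤ D := Finset.sum_nonneg fun j _ => sq_nonneg _
  -- inner products in EuclideanSpace
  have einner : ∀ a b : EuclideanSpace ℝ (Fin n), ⟪a, b⟫ = ∑ j : Fin n, a j * b j := by
    intro a b
    simp [PiLp.inner_apply, RCLike.inner_apply, mul_comm]
  -- membership helper
  have memY : ∀ z : EuclideanSpace ℝ (Fin n), z ≠ 0 →
      (‖z‖⁻¹) ^ 2 * ‖∑ j : Fin n, z j • c j‖ ^ 2 ∈ Y := by
    intro z hz
    have hnz : ‖z‖ ≠ 0 := norm_ne_zero_iff.mpr hz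
    refine ⟨‖z‖⁻¹ • z, ?_, ?_⟩
    · rw [norm_smul, norm_inv, norm_norm, inv_mul_cancel₀ hnz]
    · have hcoord : ∀ j, (‖z‖⁻¹ • z) j = ‖z‖⁻¹ * z j := fun j => rfl
      have hsum : ∑ j : Fin n, (‖z‖⁻¹ • z) j • c j = ‖z‖⁻¹ • ∑ j : Fin n, z j • c j := by
        rw [Finset.smul_sum]
        exact Finset.sum_congr rfl fun j _ => by rw [hcoord, ← smul_smul]
      rw [hsum, norm_smul, norm_inv, norm_norm, mul_pow]
  -- BddBelow / BddAbove
  have hbdd_below : BddBelow Y := ⟨0, fun y hy => by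
    obtain ⟨x, -, rfl⟩ := hy; positivity⟩
  have hbdd_above : BddAbove Y := by
    refine ⟨(∑ j : Fin n, ‖c j‖) ^ 2, fun y hy => ?_⟩
    obtain ⟨x, hx, rfl⟩ := hy
    have hxj : ∀ j : Fin n, |x j| ≤ 1 := by
      intro j
      have h1 : (x j) ^ 2 ≤ ∑ k : Fin n, (x k) ^ 2 :=
        Finset.single_le_sum (fun k _ => sq_nonneg (x k)) (Finset.mem_univ j)
      have h2 : ∑ k : Fin n, (x k) ^ 2 = 1 := by
        have := real_inner_self_eq_norm_sq x
        rw [einner x x, hx] at this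
        simpa [sq] using this
      rw [h2] at h1
      nlinarith [sq_abs (x j), abs_nonneg (x j)]
    have hb : ‖∑ j : Fin n, x j • c j‖ ≤ ∑ j : Fin n, ‖c j‖ := by
      refine le_trans (norm_sum_le _ _) (Finset.sum_le_sum fun j _ => ?_)
      rw [norm_smul, Real.norm_eq_abs]
      calc |x j| * ‖c j‖ ≤ 1 * ‖c j‖ := by
            apply mul_le_mul_of_nonneg_right (hxj j) (norm_nonneg _)
        _ = ‖c j‖ := one_mul _
    exact pow_le_pow_left₀ (norm_nonneg _) hb 2
  -- u is in the span of all columns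
  have huU : u ∈ Submodule.span ℝ (Set.range c) := by
    have h1 : u ∈ Submodule.span ℝ (c '' ↑(insert i S)) := by
      rw [hUeq]
      exact Submodule.mem_sup_left (Submodule.mem_span_singleton_self u)
    exact Submodule.span_mono (Set.image_subset_range _ _) h1
  clear_value T p w u D
  clear hproj hterm hUeq hpdef hwdef hudef hwT huT hciT hw0 hnw hF hTdef
  obtain ⟨t, htdef⟩ : ∃ t : EuclideanSpace ℝ (Fin n), t = fun j => ⟪c j, u⟫ := ⟨WithLp.toLp 2 (fun j => ⟪c j, u⟫), rfl⟩
  have hnt : ‖t‖ ^ 2 = D := by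
    have h := real_inner_self_eq_norm_sq t
    rw [einner t t] at h
    rw [← h, hDdef]
    refine Finset.sum_congr rfl fun j _ => ?_
    simp only [htdef]
    ring
  rw [hdiff]
  constructor
  · -- lower bound
    obtain ⟨v, hv⟩ := Submodule.mem_span_range_iff_exists_fun ℝ |>.mp huU
    set v' : EuclideanSpace ℝ (Fin n) := WithLp.toLp 2 v with hv'def
    have hAv : ∑ j : Fin n, v' j • c j = u := hv
    have hv0 : v' ≠ 0 := by
      intro h
      apply one_ne_zero (α := ℝ)
      rw [← hnu, ← hAv]
      have hz : ∀ j : Fin n, v' j = 0 := fun j => congrFun (congrArg WithLp.ofLp h) j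
      simp [hz]
    have hnv : ‖v'‖ ≠ 0 := norm_ne_zero_iff.mpr hv0
    have hmem := memY v' hv0
    rw [hAv, hnu] at hmem
    have hle := csInf_le hbdd_below hmem
    refine le_trans hle ?_
    have hone : (1:ℝ) = ⟪v', t⟫ := by
      have hvt : ⟪v', t⟫ = ⟪∑ j : Fin n, v' j • c j, u⟫ := by
        rw [sum_inner, einner v' t]
        refine Finset.sum_congr rfl fun j _ => ?_
        rw [real_inner_smul_left]
        simp only [htdef]
      rw [hvt, hAv, real_inner_self_eq_norm_sq, hnu]; norm_num
    have hcs : ⟪v', t⟫ ≤ ‖v'‖ * ‖t‖ := real_inner_le_norm v' t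
    have h1 : (1:ℝ) ≤ ‖v'‖ * ‖t‖ := hone ▸ hcs
    have h2 : (1:ℝ) ≤ ‖v'‖ ^ 2 * D := by
      rw [← hnt]
      calc (1:ℝ) = 1 * 1 := by ring
        _ ≤ (‖v'‖ * ‖t‖) * (‖v'‖ * ‖t‖) := by
            apply mul_le_mul h1 h1 (by norm_num) (le_trans (by norm_num) h1)
        _ = ‖v'‖ ^ 2 * ‖t‖ ^ 2 := by ring
    have hv2 : 0 < ‖v'‖ ^ 2 := by positivity
    rw [one_pow, mul_one, inv_pow]
    have hinv : 0 < (‖v'‖ ^ 2)⁻¹ := by positivity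
    nlinarith [h2, hv2, hinv, mul_inv_cancel₀ (ne_of_gt hv2)]
  · -- upper bound
    by_cases hD : D = 0
    · rw [hD]
      have hx : (EuclideanSpace.single i (1:ℝ) : EuclideanSpace ℝ (Fin n)) ≠ 0 := by
        intro h
        have := congrFun (congrArg WithLp.ofLp h) i
        simp [EuclideanSpace.single_apply] at this
      have hmem := memY _ hx
      have hle := le_csSup hbdd_above hmem
      refine le_trans ?_ hle
      exact mul_nonneg (sq_nonneg _) (sq_nonneg _)
    · have hDpos : 0 < D := lt_of_le_of_ne hD0 (Ne.symm hD)
      have ht0 : t ≠ 0 := by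
        intro h
        apply hD
        rw [← hnt, h]
        simp
      have hmem := memY t ht0
      have hle := le_csSup hbdd_above hmem
      refine le_trans ?_ hle
      have hDinner : D = ⟪∑ j : Fin n, t j • c j, u⟫ := by
        rw [sum_inner, hDdef]
        refine Finset.sum_congr rfl fun j _ => ?_
        rw [real_inner_smul_left]
        simp only [htdef]
        ring
      have hcs : ⟪∑ j : Fin n, t j • c j, u⟫ ≤ ‖∑ j : Fin n, t j • c j‖ * ‖u‖ :=
        real_inner_le_norm _ _
      have h1 : D ≤ ‖∑ j : Fin n, t j • c j‖ := by
        rw [hDinner]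
        simpa [hnu] using hcs
      have h2 : D ^ 2 ≤ ‖∑ j : Fin n, t j • c j‖ ^ 2 :=
        pow_le_pow_left₀ hD0 h1 2
      rw [inv_pow, hnt]
      have hinv : 0 < D⁻¹ := inv_pos.mpr hDpos
      calc D = D⁻¹ * D ^ 2 := by field_simp [sq]
        _ ≤ D⁻¹ * ‖∑ j : Fin n, t j • c j‖ ^ 2 :=
            mul_le_mul_of_nonneg_left h2 (le_of_lt hinv)
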